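/- Let G be a digraph, and suppose x, x', y, y', z, z' are vertices such that each of the triples {x,y,z} and {x',y',z'} has complete base graph with every vertex having out-degree at least 1 within the triple. If the pair (y, y') is weakly s-connected and the pair (z, z') is weakly s-connected, then the pair (x, x') is weakly (2s+1)-connected. -/
import Mathlib


/-- `S ∈ K_{3,1}(G)`: three vertices, each pair joined by a directed edge, each vertex
with an out-neighbour inside `S`. -/
def K31 {n : ℕ} (G : Fin n → Fin n → Prop) (S : Finset (Fin n)) : Prop :=
  S.card = 3 ∧ (∀ x ∈ S, ∀ y ∈ S, x ≠ y → G x y ∨ G y x) ∧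
    (∀ x ∈ S, ∃ y ∈ S, G x y)

/-- `u` and `u'` are weakly `s`-connected: there is a multiset `W` of `3s-1` vertices
such that both `{u} ∪ W` and `{u'} ∪ W` can be partitioned into `s` triples in
`K_{3,1}(G)`. -/
def WeaklyConn {n : ℕ} (G : Fin n → Fin n → Prop) (s : ℕ) (u u' : Fin n) : Prop :=
  ∃ W : Multiset (Fin n), Multiset.card W = 3 * s - 1 ∧
    (∃ T : Multiset (Finset (Fin n)), Multiset.card T = s ∧
      (∀ S ∈ T, K31 G S) ∧ (T.map Finset.val).sum = u ::ₘ W) ∧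
    (∃ T : Multiset (Finset (Fin n)), Multiset.card T = s ∧
      (∀ S ∈ T, K31 G S) ∧ (T.map Finset.val).sum = u' ::ₘ W)

lemma triple_val {n : ℕ} (a b c : Fin n) (h : ({a, b, c} : Finset (Fin n)).card = 3) :
    ({a, b, c} : Finset (Fin n)).val = a ::ₘ b ::ₘ c ::ₘ 0 := by
  have hab : a ≠ b := by
    rintro rfl
    simp only [Finset.insert_idem] at h
    have := Finset.card_insert_le a ({c} : Finset (Fin n))
    simp at this; omega
  have hac : a ≠ c := by
    rintro rfl
    have h2 : ({a, b, a} : Finset (Fin n)) = {a, b} := by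
      ext w; simp; tauto
    rw [h2] at h
    have := Finset.card_insert_le a ({b} : Finset (Fin n))
    simp at this; omega
  have hbc : b ≠ c := by
    rintro rfl
    simp only [Finset.pair_eq_singleton] at h
    have := Finset.card_insert_le a ({b} : Finset (Fin n))
    simp at this; omega
  rw [Finset.insert_val_of_notMem (by simp [hab, hac]),
      Finset.insert_val_of_notMem (by simp [hbc])]
  rfl

/-- If `{x,y,z}, {x',y',z'} ∈ K_{3,1}(G)`, `y, y'` are weakly `s`-connected and `z, z'`
are weakly `s`-connected, then `x, x'` are weakly `(2s+1)`-connected. -/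
theorem stmt_13 (n : ℕ) (G : Fin n → Fin n → Prop) (s : ℕ)
    (x y z x' y' z' : Fin n)
    (h1 : K31 G {x, y, z}) (h2 : K31 G {x', y', z'})
    (hy : WeaklyConn G s y y') (hz : WeaklyConn G s z z') :
    WeaklyConn G (2 * s + 1) x x' := by
  obtain ⟨Wy, hWy, ⟨Ty, hTy, hTyK, hTys⟩, ⟨Ty', hTy', hTy'K, hTy's⟩⟩ := hy
  obtain ⟨Wz, hWz, ⟨Tz, hTz, hTzK, hTzs⟩, ⟨Tz', hTz', hTz'K, hTz's⟩⟩ := hz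
  rcases Nat.eq_zero_or_pos s with hs | hs
  · subst hs
    rw [Multiset.card_eq_zero] at hTy
    subst hTy
    simp at hTys
  have hv1 := triple_val x y z h1.1
  have hv2 := triple_val x' y' z' h2.1
  refine ⟨y ::ₘ z ::ₘ ((y' ::ₘ Wy) + (z' ::ₘ Wz)), ?_,
    ⟨({x, y, z} : Finset (Fin n)) ::ₘ (Ty' + Tz'), ?_, ?_, ?_⟩,
    ⟨({x', y', z'} : Finset (Fin n)) ::ₘ (Ty + Tz), ?_, ?_, ?_⟩⟩
  · simp [hWy, hWz]; omega
  · simp [hTy', hTz']; ring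
  · intro S hS
    simp only [Multiset.mem_cons, Multiset.mem_add] at hS
    rcases hS with rfl | hS | hS
    · exact h1
    · exact hTy'K S hS
    · exact hTz'K S hS
  · simp only [Multiset.map_cons, Multiset.map_add, Multiset.sum_cons, Multiset.sum_add,
      hTy's, hTz's, hv1]
    simp only [← Multiset.singleton_add]
    abel
  · simp [hTy, hTz]; ring
  · intro S hS
    simp only [Multiset.mem_cons, Multiset.mem_add] at hS
    rcases hS with rfl | hS | hS
    · exact h2
    · exact hTyK S hS
    · exact hTzK S hS
  · simp only [Multiset.map_cons, Multiset.map_add, Multiset.sum_cons, Multiset.sum_add,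
      hTzs, hTys, hv2]
    simp only [← Multiset.singleton_add]
    abel
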